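/- If t₁·t₂ and r₁·r₂ are terms equivalent up to commutativity (t₁·t₂ ∼ r₁·r₂), then either t₁ ∼ r₁ and t₂ ∼ r₂, or t₁ ∼ r₂ and t₂ ∼ r₁. -/
import Mathlib


/-- A Steiner quasigroup: a commutative, idempotent binary structure
with `x * (x * y) = y`. -/
class Steiner (M : Type) extends Mul M where
  comm : ∀ x y : M, x * y = y * x
  idem : ∀ x : M, x * x = x
  lcancel : ∀ x y : M, x * (x * y) = y

namespace Steiner

variable {M : Type} [Steiner M]

/-- Membership in the subquasigroup generated by `A`. -/
inductive mem_closure (A : Set M) : M → Prop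
  | base {a : M} : a ∈ A → mem_closure A a
  | mul {a b : M} : mem_closure A a → mem_closure A b → mem_closure A (a * b)

/-- The subquasigroup generated by `A`. -/
def closure (A : Set M) : Set M := {x | mem_closure A x}

instance (A : Set M) : Steiner (closure A) where
  mul a b := ⟨a.1 * b.1, a.2.mul b.2⟩
  comm a b := Subtype.ext (Steiner.comm a.1 b.1)
  idem a := Subtype.ext (Steiner.idem a.1)
  lcancel a b := Subtype.ext (Steiner.lcancel a.1 b.1)

/-- `A` is independent: the generated subquasigroup has the universal mapping
property over `A` with respect to the class of Steiner quasigroups. -/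
def Independent (A : Set M) : Prop :=
  ∀ (N : Type) [Steiner N] (f : A → N),
    ∃ g : closure A →ₙ* N, ∀ a : A, g ⟨a.1, mem_closure.base a.2⟩ = f a

/-- A tuple is independent if its entries are pairwise distinct and its
range is an independent set. -/
def IndepTuple {ι : Type} (a : ι → M) : Prop :=
  Function.Injective a ∧ Independent (Set.range a)

/-- `A` is a free base of `M`: it generates `M` and `M` has the universal
mapping property over `A`. -/
def FreeBase (A : Set M) : Prop :=
  closure A = Set.univ ∧
  ∀ (N : Type) [Steiner N] (f : A → N),
    ∃ g : M →ₙ* N, ∀ a : A, g a.1 = f a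

/-- Terms in the language with one binary operation. -/
inductive Term (α : Type) where
  | var : α → Term α
  | mul : Term α → Term α → Term α

/-- Evaluation of a term at an assignment. -/
def Term.eval {α : Type} (e : α → M) : Term α → M
  | .var x => e x
  | .mul t s => t.eval e * s.eval e

/-- Equivalence of terms generated by applications of commutativity to subterms. -/
inductive TEquiv {α : Type} : Term α → Term α → Prop
  | refl (t : Term α) : TEquiv t t
  | symm {t s : Term α} : TEquiv t s → TEquiv s t
  | trans {t s u : Term α} : TEquiv t s → TEquiv s u → TEquiv t u
  | comm (t s : Term α) : TEquiv (.mul t s) (.mul s t)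
  | congr {t t' s s' : Term α} : TEquiv t t' → TEquiv s s' →
      TEquiv (.mul t s) (.mul t' s')

/-- The subterm relation. -/
inductive Subterm {α : Type} : Term α → Term α → Prop
  | refl (t : Term α) : Subterm t t
  | left {s t r : Term α} : Subterm s t → Subterm s (.mul t r)
  | right {s t r : Term α} : Subterm s t → Subterm s (.mul r t)

/-- A term is reduced if it contains no subterm of the forms `t₁·t₂` with
`t₁ ∼ t₂`, `t₁·(t₂·t₃)` with `t₁ ∼ t₂` or `t₁ ∼ t₃`, or `(t₁·t₂)·t₃` with
`t₁ ∼ t₃` or `t₂ ∼ t₃`. -/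
def Reduced {α : Type} (t : Term α) : Prop :=
  (∀ t1 t2 : Term α, Subterm (.mul t1 t2) t → ¬ TEquiv t1 t2) ∧
  (∀ t1 t2 t3 : Term α, Subterm (.mul t1 (.mul t2 t3)) t →
      ¬ TEquiv t1 t2 ∧ ¬ TEquiv t1 t3) ∧
  (∀ t1 t2 t3 : Term α, Subterm (.mul (.mul t1 t2) t3) t →
      ¬ TEquiv t1 t3 ∧ ¬ TEquiv t2 t3)

/-- The rank of a term. -/
def Term.rank {α : Type} : Term α → ℕ
  | .var _ => 0
  | .mul t s => max t.rank s.rank + 1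

/-- Number of occurrences of a variable in a term. -/
def Term.occ {α : Type} [DecidableEq α] (x : α) : Term α → ℕ
  | .var y => if y = x then 1 else 0
  | .mul t s => t.occ x + s.occ x

/-- The variable `x` occurs in the term. -/
inductive Occurs {α : Type} (x : α) : Term α → Prop
  | var : Occurs x (.var x)
  | left {t s : Term α} : Occurs x t → Occurs x (.mul t s)
  | right {t s : Term α} : Occurs x s → Occurs x (.mul t s)

/-- The levels of `M` over `A`. -/
def level (A : Set M) : ℕ → Set M
  | 0 => A
  | n + 1 => {z | ∃ a ∈ level A n, ∃ b ∈ level A n, z = a * b}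

/-- `S` is a standard free construction over `A`. -/
def StdFree (A : Set M) (S : ℕ → Set M) : Prop :=
  S 0 = A ∧
  (∀ n, S (n + 1) = {z | ∃ a ∈ S n, ∃ b ∈ S n, z = a * b}) ∧
  (∀ a ∈ S 0, ∀ b ∈ S 0, a ≠ b → a * b ∉ S 0) ∧
  (∀ n, ∀ a ∈ S (n + 1), a ∉ S n → ∀ b ∈ S (n + 1), b ∉ S n → a ≠ b →
    a * b ∉ S (n + 1)) ∧
  (∀ n, ∀ a ∈ S (n + 1), a ∉ S n → ∃ b ∈ S n, ∃ c ∈ S n, b ≠ c ∧ a = b * c ∧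
    ∀ b' ∈ S n, ∀ c' ∈ S n, b' ≠ c' → a = b' * c' → ({b', c'} : Set M) = {b, c})

theorem eval_mem_closure {α : Type} {A : Set M} (e : α → M) (h : ∀ x, e x ∈ A) :
    ∀ t : Term α, t.eval e ∈ closure A
  | .var x => mem_closure.base (h x)
  | .mul t s => mem_closure.mul (eval_mem_closure e h t) (eval_mem_closure e h s)

end Steiner

open Steiner
/-- One direction of the matching property. -/
def MulMatch {α : Type} (t s : Term α) : Prop :=
  ∀ t1 t2, t = Term.mul t1 t2 →
    ∃ r1 r2, s = Term.mul r1 r2 ∧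
      ((TEquiv t1 r1 ∧ TEquiv t2 r2) ∨ (TEquiv t1 r2 ∧ TEquiv t2 r1))

lemma tequiv_mul_aux {α : Type} {t s : Term α} (h : TEquiv t s) :
    MulMatch t s ∧ MulMatch s t := by
  induction h with
  | refl t =>
    exact ⟨fun t1 t2 he => ⟨t1, t2, he, Or.inl ⟨.refl _, .refl _⟩⟩,
           fun t1 t2 he => ⟨t1, t2, he, Or.inl ⟨.refl _, .refl _⟩⟩⟩
  | symm h ih => exact ⟨ih.2, ih.1⟩
  | trans h1 h2 ih1 ih2 =>
    constructor
    · intro t1 t2 he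
      obtain ⟨r1, r2, he', hd⟩ := ih1.1 _ _ he
      obtain ⟨u1, u2, he'', hd'⟩ := ih2.1 _ _ he'
      refine ⟨u1, u2, he'', ?_⟩
      rcases hd with ⟨a, b⟩ | ⟨a, b⟩ <;> rcases hd' with ⟨c, d⟩ | ⟨c, d⟩
      · exact Or.inl ⟨a.trans c, b.trans d⟩
      · exact Or.inr ⟨a.trans c, b.trans d⟩
      · exact Or.inr ⟨a.trans d, b.trans c⟩
      · exact Or.inl ⟨a.trans d, b.trans c⟩
    · intro t1 t2 he
      obtain ⟨r1, r2, he', hd⟩ := ih2.2 _ _ he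
      obtain ⟨u1, u2, he'', hd'⟩ := ih1.2 _ _ he'
      refine ⟨u1, u2, he'', ?_⟩
      rcases hd with ⟨a, b⟩ | ⟨a, b⟩ <;> rcases hd' with ⟨c, d⟩ | ⟨c, d⟩
      · exact Or.inl ⟨a.trans c, b.trans d⟩
      · exact Or.inr ⟨a.trans c, b.trans d⟩
      · exact Or.inr ⟨a.trans d, b.trans c⟩
      · exact Or.inl ⟨a.trans d, b.trans c⟩
  | comm t s =>
    constructor <;> intro t1 t2 he <;> cases he <;>
      exact ⟨_, _, rfl, Or.inr ⟨.refl _, .refl _⟩⟩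
  | congr h1 h2 ih1 ih2 =>
    constructor <;> intro t1 t2 he <;> cases he
    · exact ⟨_, _, rfl, Or.inl ⟨h1, h2⟩⟩
    · exact ⟨_, _, rfl, Or.inl ⟨h1.symm, h2.symm⟩⟩

/-- If `t₁·t₂ ∼ r₁·r₂`, then the factors match up to commutativity. -/
theorem stmt12 {α : Type} {t1 t2 r1 r2 : Term α}
    (h : TEquiv (Term.mul t1 t2) (Term.mul r1 r2)) :
    (TEquiv t1 r1 ∧ TEquiv t2 r2) ∨ (TEquiv t1 r2 ∧ TEquiv t2 r1) := by
  obtain ⟨u1, u2, he, hd⟩ := tequiv_mul_aux h |>.1 _ _ rfl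
  cases he
  exact hd
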